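/- Let G, G' : U → GL_q(ℂ) be holomorphic maps on an open set U ⊆ ℂⁿ. Then dG · G⁻¹ = dG' · (G')⁻¹ on U if and only if G' = G · A for some locally constant map A : U → GL_q(ℂ) (i.e. A has zero derivative on U). -/

import Mathlib

attribute [local instance] Matrix.frobeniusNormedAddCommGroup Matrix.frobeniusNormedSpace
attribute [local instance] Matrix.frobeniusNormedRing Matrix.frobeniusNormedAlgebra

/-- For holomorphic `G, G' : U → GL_q(ℂ)` on an open `U ⊆ ℂⁿ`:
`dG·G⁻¹ = dG'·G'⁻¹` on `U` iff `G' = G·A` for some locally constant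
(`i.e.` zero-derivative) invertible-valued map `A`. -/
theorem logDeriv_eq_iff_locally_constant_factor {n q : ℕ} {U : Set (Fin n → ℂ)}
    (hU : IsOpen U)
    (G G' : (Fin n → ℂ) → Matrix (Fin q) (Fin q) ℂ)
    (hG : DifferentiableOn ℂ G U) (hG' : DifferentiableOn ℂ G' U)
    (hGinv : ∀ p ∈ U, IsUnit (G p)) (hG'inv : ∀ p ∈ U, IsUnit (G' p)) :
    (∀ p ∈ U, ∀ v : Fin n → ℂ,
        (fderiv ℂ G p v) * (G p)⁻¹ = (fderiv ℂ G' p v) * (G' p)⁻¹)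
      ↔ ∃ A : (Fin n → ℂ) → Matrix (Fin q) (Fin q) ℂ,
          (∀ p ∈ U, IsUnit (A p)) ∧
          (∀ p ∈ U, fderiv ℂ A p = 0) ∧
          (∀ p ∈ U, G' p = G p * A p) := by
  constructor
  · intro h
    refine ⟨fun p => (G p)⁻¹ * G' p, ?_, ?_, ?_⟩
    · intro p hp
      exact (Matrix.isUnit_nonsing_inv_iff.mpr (hGinv p hp)).mul (hG'inv p hp)
    · intro p hp
      have hp' := hU.mem_nhds hp
      have hGd : HasFDerivAt G (fderiv ℂ G p) p := (hG.differentiableAt hp').hasFDerivAt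
      have hG'd : HasFDerivAt G' (fderiv ℂ G' p) p := (hG'.differentiableAt hp').hasFDerivAt
      set u := (hGinv p hp).unit with hu
      have huv : (u : Matrix (Fin q) (Fin q) ℂ) = G p := (hGinv p hp).unit_spec
      have huiv : ((u⁻¹ : _ˣ) : Matrix (Fin q) (Fin q) ℂ) = (G p)⁻¹ := by
        rw [← huv]; exact Matrix.coe_units_inv u
      have hinv : HasFDerivAt (fun x => Ring.inverse (G x))
          ((-ContinuousLinearMap.mulLeftRight ℂ _ ((u⁻¹ : _ˣ) : Matrix (Fin q) (Fin q) ℂ)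
            ((u⁻¹ : _ˣ) : Matrix (Fin q) (Fin q) ℂ)).comp (fderiv ℂ G p)) p := by
        have h1 := hasFDerivAt_ringInverse (𝕜 := ℂ) u
        rw [huv] at h1
        exact h1.comp p hGd
      have hAeq : (fun p => (G p)⁻¹ * G' p) = fun x => Ring.inverse (G x) * G' x := by
        funext x; rw [Matrix.nonsing_inv_eq_ringInverse]
      rw [hAeq]
      have hmul : HasFDerivAt (fun x => Ring.inverse (G x) * G' x) _ p := hinv.mul' hG'd
      rw [hmul.fderiv]
      refine ContinuousLinearMap.ext fun v => ?_
      show Ring.inverse (G p) * fderiv ℂ G' p v +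
        -(((u⁻¹ : _ˣ) : Matrix (Fin q) (Fin q) ℂ) * fderiv ℂ G p v *
          ((u⁻¹ : _ˣ) : Matrix (Fin q) (Fin q) ℂ)) * G' p = 0
      rw [huiv, ← Matrix.nonsing_inv_eq_ringInverse]
      have key : fderiv ℂ G p v * (G p)⁻¹ * G' p = fderiv ℂ G' p v := by
        rw [h p hp v, Matrix.mul_assoc, Matrix.nonsing_inv_mul _
          ((Matrix.isUnit_iff_isUnit_det _).mp (hG'inv p hp)), Matrix.mul_one]
      rw [neg_mul, Matrix.mul_assoc ((G p)⁻¹) (fderiv ℂ G p v) ((G p)⁻¹),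
        Matrix.mul_assoc ((G p)⁻¹) _ (G' p), key]
      abel
    · intro p hp
      rw [← Matrix.mul_assoc, Matrix.mul_nonsing_inv _
        ((Matrix.isUnit_iff_isUnit_det _).mp (hGinv p hp)), Matrix.one_mul]
  · rintro ⟨A, hAu, hA0, hGA⟩ p hp v
    have hp' := hU.mem_nhds hp
    have hGd : HasFDerivAt G (fderiv ℂ G p) p := (hG.differentiableAt hp').hasFDerivAt
    have hG'd : HasFDerivAt G' (fderiv ℂ G' p) p := (hG'.differentiableAt hp').hasFDerivAt
    have hAeq : A =ᶠ[nhds p] fun x => Ring.inverse (G x) * G' x := by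
      filter_upwards [hp'] with x hx
      rw [hGA x hx, ← mul_assoc, Ring.inverse_mul_cancel _ (hGinv x hx), one_mul]
    have hBd : DifferentiableAt ℂ (fun x => Ring.inverse (G x) * G' x) p :=
      ((differentiableAt_inverse (hGinv p hp)).comp p hGd.differentiableAt).mul
        hG'd.differentiableAt
    have hAd : DifferentiableAt ℂ A p := hBd.congr_of_eventuallyEq hAeq
    have hA0' : HasFDerivAt A 0 p := hA0 p hp ▸ hAd.hasFDerivAt
    have hGAeq : G' =ᶠ[nhds p] fun x => G x * A x := by
      filter_upwards [hp'] with x hx; exact hGA x hx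
    have hmul := (hGd.mul' hA0').congr_of_eventuallyEq hGAeq
    have hfd : fderiv ℂ G' p v = fderiv ℂ G p v * A p := by
      erw [hmul.fderiv]
      change (G p • (0 : (Fin n → ℂ) →L[ℂ] Matrix (Fin q) (Fin q) ℂ) + MulOpposite.op (A p) • fderiv ℂ G p) v = _
      simp [ContinuousLinearMap.add_apply, ContinuousLinearMap.smul_apply,
        ContinuousLinearMap.smulRight_apply, ContinuousLinearMap.zero_apply, smul_eq_mul]
    rw [hfd, hGA p hp, Matrix.mul_inv_rev, ← Matrix.mul_assoc, Matrix.mul_assoc _ (A p),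
      Matrix.mul_nonsing_inv _ ((Matrix.isUnit_iff_isUnit_det _).mp (hAu p hp)), Matrix.mul_one]
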